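/- arXiv:2407.13190 — 2 statements merged into one kernel-verified Lean document; each statement's English description precedes it below -/
import Mathlib

section
/- For a finite linear combination $T = \sum_{j,k} a_{jk} T_{jk}$, the $G$-norm satisfies the Parseval-type identity $\|T\|_G^2 = \sum_{j,k} |a_{jk}|^2$. -/
open Filter Finset MeasureTheory
open scoped ENNReal

noncomputable section

/-- The index set `I = (0,1] ∩ ℚ`. -/
abbrev Iq : Type := {q : ℚ // 0 < q ∧ q ≤ 1}

/-- The Hilbert space `ℋ² = ⊕_{l ∈ I} H²[-π,π]`, realized via the orthonormal basis
`{e_{lk} : l ∈ I, k ∈ ℕ}` as `ℓ²(I × ℕ)`. -/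
abbrev H2 : Type := lp (fun _ : Iq × ℕ => ℂ) 2

/-- The basis vector `e_{lk}` of `ℋ²` (zero if `l ∉ (0,1]`). -/
def basisVec (l : ℚ) (k : ℕ) : H2 :=
  if h : 0 < l ∧ l ≤ 1 then lp.single 2 ((⟨l, h⟩ : Iq), k) (1 : ℂ) else 0

/-- Index set for `Bₙ = {e_{lr} : r = 0,…,⌊n/⌊√n⌋⌋-1, l ∈ I_{⌊√n⌋}}`:
pairs `(p, r)` with `1 ≤ p ≤ ⌊√n⌋` and `r < ⌊n/⌊√n⌋⌋`, where `l = p/⌊√n⌋`. -/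
def Bfin (n : ℕ) : Finset (ℕ × ℕ) :=
  (Finset.Icc 1 (Nat.sqrt n)) ×ˢ (Finset.range (n / Nat.sqrt n))

/-- The basis vector of `Bₙ` indexed by `(p, r)`, namely `e_{p/⌊√n⌋, r}`. -/
def bvec (n : ℕ) (pr : ℕ × ℕ) : H2 :=
  basisVec ((pr.1 : ℚ) / (Nat.sqrt n : ℚ)) pr.2

/-- `∑_{e ∈ C} ‖Te‖²` for a subset `C` of the index set of `Bₙ`. -/
def sumSq (T : H2 → H2) (n : ℕ) (C : Finset (ℕ × ℕ)) : ℝ :=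
  ∑ pr ∈ C, ‖T (bvec n pr)‖ ^ 2

/-- The seminorm `Q(T) = inf { limsup_n (1/√n)(∑_{e ∈ Cₙ} ‖Te‖²)^{1/2} }`, the infimum
over all decompositions `Bₙ = Cₙ ⊔ Dₙ` with `#Dₙ = o(n)`, valued in `ℝ≥0∞`. -/
def QQ (T : H2 → H2) : ℝ≥0∞ :=
  ⨅ (C : ℕ → Finset (ℕ × ℕ)) (_ : ∀ n, C n ⊆ Bfin n)
    (_ : Tendsto (fun n => ((Bfin n \ C n).card : ℝ) / n) atTop (nhds 0)),
    Filter.limsup (fun n => ENNReal.ofReal (Real.sqrt (sumSq T n (C n) / n))) atTop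

/-- `T` acts like the operator `T_{jk}`:
`T(e_{lr}) = e^{2πijl} e_{l,r+k}` when `r + k ≥ 0`, and `0` otherwise. -/
def IsTjk (T : H2 → H2) (j k : ℤ) : Prop :=
  ∀ (l : ℚ) (r : ℕ), T (basisVec l r) =
    if 0 ≤ (r : ℤ) + k then
      Complex.exp (2 * Real.pi * Complex.I * (j : ℂ) * (l : ℂ)) • basisVec l ((r : ℤ) + k).toNat
    else 0

-- ==================== auxiliary lemmas ====================

private lemma char_sum' (d : ℤ) (m : ℕ) (hm : 1 ≤ m) (hd : d.natAbs < m) :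
    ∑ p ∈ Finset.Icc 1 m, Complex.exp (2 * Real.pi * Complex.I * (d : ℂ) * (((p:ℚ)/(m:ℚ) : ℚ) : ℂ))
      = if d = 0 then (m : ℂ) else 0 := by
  by_cases h0 : d = 0
  · simp [h0]
  · simp only [h0, if_false]
    set z : ℂ := Complex.exp (2 * Real.pi * Complex.I * (d : ℂ) / (m : ℂ)) with hz
    have hm0 : (m : ℂ) ≠ 0 := by
      exact Nat.cast_ne_zero.mpr (by omega)
    have hzp : ∀ p : ℕ, Complex.exp (2 * Real.pi * Complex.I * (d : ℂ) * (((p:ℚ)/(m:ℚ) : ℚ) : ℂ)) = z ^ p := by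
      intro p
      rw [hz, ← Complex.exp_nat_mul]
      congr 1
      push_cast
      field_simp
    have hz1 : z ≠ 1 := by
      rw [hz]
      intro h
      rw [Complex.exp_eq_one_iff] at h
      obtain ⟨k, hk⟩ := h
      have h2 : (2 * Real.pi * Complex.I : ℂ) ≠ 0 := by
        simp [Real.pi_ne_zero, Complex.I_ne_zero]
      have hdc : (d : ℂ) = k * m := by
        field_simp at hk
        have h3 : (d : ℂ) * (2 * Real.pi * Complex.I) = (k * m) * (2 * Real.pi * Complex.I) := by
          linear_combination (2 * Real.pi * Complex.I) * hk
        exact mul_right_cancel₀ h2 h3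
      have hdk : d = k * m := by exact_mod_cast hdc
      rcases eq_or_ne k 0 with rfl | hk0
      · simp at hdk; exact h0 hdk
      · have h4 : d.natAbs = k.natAbs * m := by rw [hdk]; simp [Int.natAbs_mul]
        have : m ≤ d.natAbs := by
          rw [h4]; nlinarith [Int.natAbs_pos.mpr hk0]
        omega
    have hzm : z ^ m = 1 := by
      rw [hz, ← Complex.exp_nat_mul]
      have : (m : ℂ) * (2 * ↑Real.pi * Complex.I * ↑d / ↑m) = (d : ℂ) * (2 * Real.pi * Complex.I) := by
        field_simp
      rw [this]
      exact_mod_cast Complex.exp_int_mul_two_pi_mul_I d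
    calc ∑ p ∈ Finset.Icc 1 m, Complex.exp (2 * Real.pi * Complex.I * (d : ℂ) * (((p:ℚ)/(m:ℚ) : ℚ) : ℂ))
        = ∑ p ∈ Finset.Icc 1 m, z ^ p := Finset.sum_congr rfl fun p _ => hzp p
      _ = ∑ q ∈ Finset.range m, z ^ (1 + q) := by
            rw [← Finset.Ico_add_one_right_eq_Icc, Finset.sum_Ico_eq_sum_range]; simp
      _ = z * ∑ q ∈ Finset.range m, z ^ q := by
            rw [Finset.mul_sum]; exact Finset.sum_congr rfl fun q _ => by rw [pow_add, pow_one]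
      _ = z * ((z ^ m - 1) / (z - 1)) := by rw [geom_sum_eq hz1]
      _ = 0 := by rw [hzm]; simp

private lemma inner_basisVec (l : ℚ) (h : 0 < l ∧ l ≤ 1) (k k' : ℕ) :
    inner (𝕜 := ℂ) (basisVec l k) (basisVec l k') = if k = k' then 1 else 0 := by
  classical
  rw [basisVec, basisVec, dif_pos h, dif_pos h, lp.inner_single_left, lp.single_apply]
  simp [Pi.single_apply, eq_comm, Prod.ext_iff]

private lemma conj_exp_mul (j j' : ℤ) (l : ℚ) :
    (starRingEnd ℂ) (Complex.exp (2 * Real.pi * Complex.I * (j : ℂ) * (l : ℂ))) *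
      Complex.exp (2 * Real.pi * Complex.I * (j' : ℂ) * (l : ℂ))
    = Complex.exp (2 * Real.pi * Complex.I * ((j' - j : ℤ) : ℂ) * (l : ℂ)) := by
  rw [← Complex.exp_conj, ← Complex.exp_add]
  congr 1
  have h1 : ((l : ℂ)) = ((l : ℝ) : ℂ) := by push_cast; ring
  have h2 : ((j : ℂ)) = ((j : ℝ) : ℂ) := by push_cast; ring
  simp only [map_mul, Complex.conj_I, Complex.conj_ofNat]
  rw [h1, h2, Complex.conj_ofReal, Complex.conj_ofReal, Complex.conj_ofReal]
  push_cast
  ring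

private lemma inner_term (j j' k k' : ℤ) (l : ℚ) (hl : 0 < l ∧ l ≤ 1) (r : ℕ) :
    inner (𝕜 := ℂ)
      (if 0 ≤ (r:ℤ)+k then Complex.exp (2*Real.pi*Complex.I*(j:ℂ)*(l:ℂ)) • basisVec l ((r:ℤ)+k).toNat else 0)
      (if 0 ≤ (r:ℤ)+k' then Complex.exp (2*Real.pi*Complex.I*(j':ℂ)*(l:ℂ)) • basisVec l ((r:ℤ)+k').toNat else 0)
    = if (0 ≤ (r:ℤ)+k ∧ k' = k) then Complex.exp (2*Real.pi*Complex.I*((j'-j : ℤ):ℂ)*(l:ℂ)) else 0 := by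
  by_cases h1 : 0 ≤ (r:ℤ)+k
  · by_cases h2 : 0 ≤ (r:ℤ)+k'
    · rw [if_pos h1, if_pos h2, inner_smul_left, inner_smul_right, inner_basisVec l hl]
      have : (((r:ℤ)+k).toNat = ((r:ℤ)+k').toNat) ↔ k' = k := by omega
      by_cases h3 : k' = k
      · rw [if_pos (this.mpr h3), if_pos ⟨h1, h3⟩, mul_one, conj_exp_mul]
      · rw [if_neg (fun hh => h3 (this.mp hh)), if_neg (fun hh => h3 hh.2)]
        ring
    · rw [if_pos h1, if_neg h2, inner_zero_right, if_neg (by omega)]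
  · rw [if_neg h1, inner_zero_left, if_neg (by tauto)]

/-- number of valid `r`'s in `range R` for shift `k` -/
private def cnt (R : ℕ) (k : ℤ) : ℕ := ((Finset.range R).filter (fun r : ℕ => 0 ≤ (r:ℤ)+k)).card

private lemma cnt_le (R : ℕ) (k : ℤ) : cnt R k ≤ R :=
  le_trans (Finset.card_filter_le _ _) (by rw [Finset.card_range])

private lemma le_cnt (R : ℕ) (k : ℤ) : R - (-k).toNat ≤ cnt R k := by
  classical
  have hsub : (Finset.range R).filter (fun r : ℕ => ¬ 0 ≤ (r:ℤ)+k) ⊆ Finset.range ((-k).toNat) := by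
    intro r hr
    rw [Finset.mem_filter, Finset.mem_range] at hr
    rw [Finset.mem_range]
    omega
  have h1 := Finset.card_le_card hsub
  rw [Finset.card_range] at h1
  have h2 := Finset.card_filter_add_card_filter_not (s := Finset.range R)
    (p := fun r : ℕ => 0 ≤ (r:ℤ)+k)
  rw [Finset.card_range] at h2
  unfold cnt
  omega

private lemma key (s : Finset (ℤ × ℤ)) (a : ℤ × ℤ → ℂ) (Top : ℤ × ℤ → H2 → H2)
    (hTop : ∀ jk ∈ s, IsTjk (Top jk) jk.1 jk.2) (n : ℕ) (hm1 : 1 ≤ n.sqrt)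
    (hbig : ∀ x ∈ s, ∀ y ∈ s, (y.1 - x.1).natAbs < n.sqrt) :
    ∑ pr ∈ Bfin n, ‖∑ jk ∈ s, a jk • Top jk (bvec n pr)‖ ^ 2
    = ∑ jk ∈ s, ‖a jk‖^2 * (n.sqrt * cnt (n / n.sqrt) jk.2) := by
  classical
  set m := n.sqrt with hm
  set R := n / m with hR
  set F : (ℤ×ℤ) → (ℤ×ℤ) → ℕ → ℕ → ℂ := fun x y p r =>
    (starRingEnd ℂ) (a x) * (a y *
      (if (0 ≤ (r:ℤ)+x.2 ∧ y.2 = x.2) then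
        Complex.exp (2*Real.pi*Complex.I*((y.1-x.1 : ℤ):ℂ)*((((p:ℚ)/(m:ℚ)) : ℚ):ℂ)) else 0)) with hF
  have hl : ∀ p ∈ Finset.Icc 1 m, 0 < ((p:ℚ)/(m:ℚ)) ∧ ((p:ℚ)/(m:ℚ)) ≤ 1 := by
    intro p hp
    rw [Finset.mem_Icc] at hp
    have h1 : (0:ℚ) < (m:ℚ) := by exact_mod_cast (by omega : 0 < m)
    constructor
    · apply div_pos _ h1; exact_mod_cast (by omega : 0 < p)
    · rw [div_le_one h1]; exact_mod_cast hp.2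
  have step1 : ∀ p ∈ Finset.Icc 1 m, ∀ r ∈ Finset.range R,
      (‖∑ jk ∈ s, a jk • Top jk (bvec n (p, r))‖ ^ 2 : ℝ)
      = (∑ x ∈ s, ∑ y ∈ s, F x y p r).re := by
    intro p hp r _
    have hv : (inner (𝕜 := ℂ) (∑ jk ∈ s, a jk • Top jk (bvec n (p, r)))
        (∑ jk ∈ s, a jk • Top jk (bvec n (p, r)))) = ∑ x ∈ s, ∑ y ∈ s, F x y p r := by
      rw [sum_inner]
      refine Finset.sum_congr rfl fun x hx => ?_
      rw [inner_sum]
      refine Finset.sum_congr rfl fun y hy => ?_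
      rw [inner_smul_left, inner_smul_right, hF]
      congr 2
      have hbx := hTop x hx ((p:ℚ)/(m:ℚ)) r
      have hby := hTop y hy ((p:ℚ)/(m:ℚ)) r
      simp only [bvec]
      rw [hbx, hby, inner_term x.1 y.1 x.2 y.2 _ (hl p hp) r]
    have h := @inner_self_eq_norm_sq_to_K ℂ _ _ _ _ (∑ jk ∈ s, a jk • Top jk (bvec n (p, r)))
    rw [hv] at h
    rw [h]
    norm_cast
  rw [Bfin, Finset.sum_product]
  rw [Finset.sum_congr rfl (fun p hp => Finset.sum_congr rfl (fun r hr => step1 p hp r hr))]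
  have assemble : ∑ p ∈ Finset.Icc 1 m, ∑ r ∈ Finset.range R, (∑ x ∈ s, ∑ y ∈ s, F x y p r).re
      = (∑ p ∈ Finset.Icc 1 m, ∑ r ∈ Finset.range R, ∑ x ∈ s, ∑ y ∈ s, F x y p r).re := by
    rw [Complex.re_sum]
    exact Finset.sum_congr rfl fun p _ => (Complex.re_sum _ _).symm
  rw [assemble]
  have swap : ∑ p ∈ Finset.Icc 1 m, ∑ r ∈ Finset.range R, ∑ x ∈ s, ∑ y ∈ s, F x y p r
      = ∑ x ∈ s, ∑ y ∈ s, ∑ p ∈ Finset.Icc 1 m, ∑ r ∈ Finset.range R, F x y p r := by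
    have e1 : ∀ p : ℕ, ∑ r ∈ Finset.range R, ∑ x ∈ s, ∑ y ∈ s, F x y p r
        = ∑ x ∈ s, ∑ y ∈ s, ∑ r ∈ Finset.range R, F x y p r := by
      intro p
      rw [Finset.sum_comm]
      exact Finset.sum_congr rfl fun x _ => Finset.sum_comm
    rw [Finset.sum_congr rfl fun p _ => e1 p, Finset.sum_comm]
    exact Finset.sum_congr rfl fun x _ => Finset.sum_comm
  rw [swap]
  have eval : ∀ x ∈ s, ∑ y ∈ s, ∑ p ∈ Finset.Icc 1 m, ∑ r ∈ Finset.range R, F x y p r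
      = (starRingEnd ℂ) (a x) * a x * (m : ℂ) * (cnt R x.2 : ℂ) := by
    intro x hx
    have hyval : ∀ y ∈ s, ∑ p ∈ Finset.Icc 1 m, ∑ r ∈ Finset.range R, F x y p r
        = if y = x then (starRingEnd ℂ) (a x) * a x * (m : ℂ) * (cnt R x.2 : ℂ) else 0 := by
      intro y hy
      have hr : ∀ p : ℕ, ∑ r ∈ Finset.range R, F x y p r
          = if y.2 = x.2 then (cnt R x.2 : ℂ) * ((starRingEnd ℂ) (a x) * a y *
              Complex.exp (2*Real.pi*Complex.I*((y.1-x.1 : ℤ):ℂ)*((((p:ℚ)/(m:ℚ)) : ℚ):ℂ))) else 0 := by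
        intro p
        by_cases hq : y.2 = x.2
        · simp only [hF, hq, and_true, if_true]
          rw [← Finset.mul_sum, ← Finset.mul_sum, ← Finset.sum_filter, Finset.sum_const,
            nsmul_eq_mul]
          rw [cnt]
          ring
        · simp [hF, hq]
      rw [Finset.sum_congr rfl (fun p _ => hr p)]
      by_cases hq : y.2 = x.2
      · simp only [hq, if_true]
        rw [← Finset.mul_sum]
        have : ∑ p ∈ Finset.Icc 1 m, ((starRingEnd ℂ) (a x) * a y *
            Complex.exp (2*Real.pi*Complex.I*((y.1-x.1 : ℤ):ℂ)*((((p:ℚ)/(m:ℚ)) : ℚ):ℂ)))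
            = (starRingEnd ℂ) (a x) * a y * (if y.1 - x.1 = 0 then (m:ℂ) else 0) := by
          rw [← Finset.mul_sum, char_sum' (y.1 - x.1) m hm1 (hbig x hx y hy)]
        rw [this]
        by_cases hj : y.1 = x.1
        · have hyx : y = x := Prod.ext hj hq
          rw [if_pos (by omega : y.1 - x.1 = 0), if_pos hyx, hyx]
          ring
        · rw [if_neg (by omega : ¬ (y.1 - x.1 = 0)), if_neg (fun h => hj (by rw [h]))]
          ring
      · rw [if_neg (fun h => hq (by rw [h]))]
        simp [hq]
    rw [Finset.sum_congr rfl hyval, Finset.sum_ite_eq' s x, if_pos hx]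
  rw [Finset.sum_congr rfl eval, Complex.re_sum]
  refine Finset.sum_congr rfl fun x _ => ?_
  have h1 : (starRingEnd ℂ) (a x) * a x = ((‖a x‖^2 : ℝ) : ℂ) := by
    rw [mul_comm, Complex.mul_conj']
    norm_cast
  rw [h1, show ((m:ℂ)) = ((m:ℝ):ℂ) by norm_cast,
    show ((cnt R x.2 : ℂ)) = ((cnt R x.2 : ℝ):ℂ) by norm_cast,
    ← Complex.ofReal_mul, ← Complex.ofReal_mul, Complex.ofReal_re]
  ring

private lemma sqrt_tendsto : Tendsto Nat.sqrt atTop atTop := by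
  rw [tendsto_atTop_atTop]
  intro b
  refine ⟨b*b, fun n hn => ?_⟩
  calc b = Nat.sqrt (b*b) := (Nat.sqrt_eq b).symm
    _ ≤ Nat.sqrt n := Nat.sqrt_le_sqrt hn

private lemma sqrt_div_tendsto : Tendsto (fun n : ℕ => (n.sqrt : ℝ)/n) atTop (nhds 0) := by
  have h1 : Tendsto (fun n : ℕ => 1/(n.sqrt : ℝ)) atTop (nhds 0) :=
    (tendsto_one_div_atTop_nhds_zero_nat).comp sqrt_tendsto
  refine tendsto_of_tendsto_of_tendsto_of_le_of_le' tendsto_const_nhds h1 ?_ ?_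
  · filter_upwards [eventually_ge_atTop 1] with n hn
    positivity
  · filter_upwards [eventually_ge_atTop 1] with n hn
    have hs : 1 ≤ n.sqrt := by
      have := Nat.sqrt_pos.mpr (by omega : 0 < n); omega
    have hss : (n.sqrt : ℝ)^2 ≤ n := by exact_mod_cast Nat.sqrt_le' n
    have h0 : (0:ℝ) < n := by exact_mod_cast (by omega : 0 < n)
    have h0s : (0:ℝ) < n.sqrt := by exact_mod_cast hs
    rw [div_le_div_iff₀ h0 h0s]
    nlinarith

private lemma muldiv_tendsto :
    Tendsto (fun n : ℕ => ((n.sqrt * (n / n.sqrt) : ℕ) : ℝ)/n) atTop (nhds 1) := by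
  refine tendsto_of_tendsto_of_tendsto_of_le_of_le'
    (g := fun n : ℕ => 1 - (n.sqrt : ℝ)/n) (h := fun _ => (1:ℝ))
    (by simpa using tendsto_const_nhds.sub sqrt_div_tendsto) tendsto_const_nhds ?_ ?_
  · filter_upwards [eventually_ge_atTop 1] with n hn
    have hs : 1 ≤ n.sqrt := by have := Nat.sqrt_pos.mpr (by omega : 0 < n); omega
    have h0 : (0:ℝ) < n := by exact_mod_cast (by omega : 0 < n)
    have hnat : n ≤ n.sqrt * (n / n.sqrt) + n.sqrt := by
      have h := Nat.mod_lt n (y := n.sqrt) (by omega)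
      have h2 := Nat.div_add_mod n n.sqrt
      omega
    have key : (n:ℝ) - n.sqrt ≤ ((n.sqrt * (n / n.sqrt) : ℕ) : ℝ) := by
      have : (n:ℝ) ≤ ((n.sqrt * (n / n.sqrt) : ℕ) : ℝ) + n.sqrt := by exact_mod_cast hnat
      linarith
    have heq : 1 - (n.sqrt:ℝ)/n = ((n:ℝ) - n.sqrt)/n := by field_simp
    rw [heq]
    exact div_le_div_of_nonneg_right key h0.le
  · filter_upwards [eventually_ge_atTop 1] with n hn
    have h0 : (0:ℝ) < n := by exact_mod_cast (by omega : 0 < n)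
    rw [div_le_one h0]
    have : n.sqrt * (n / n.sqrt) ≤ n := by
      rw [Nat.mul_comm]; exact Nat.div_mul_le_self n n.sqrt
    exact_mod_cast this

private lemma cnt_tendsto (k : ℤ) :
    Tendsto (fun n : ℕ => ((n.sqrt * cnt (n / n.sqrt) k : ℕ) : ℝ)/n) atTop (nhds 1) := by
  set c : ℕ := (-k).toNat with hc
  refine tendsto_of_tendsto_of_tendsto_of_le_of_le'
    (g := fun n : ℕ => ((n.sqrt * (n / n.sqrt) : ℕ) : ℝ)/n - c * ((n.sqrt : ℝ)/n))
    (h := fun n : ℕ => ((n.sqrt * (n / n.sqrt) : ℕ) : ℝ)/n)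
    (by simpa using muldiv_tendsto.sub ((sqrt_div_tendsto.const_mul (c:ℝ)))) muldiv_tendsto ?_ ?_
  · filter_upwards [eventually_ge_atTop 1] with n hn
    have h0 : (0:ℝ) < n := by exact_mod_cast (by omega : 0 < n)
    have hcnt := le_cnt (n / n.sqrt) k
    have h1 : ((n / n.sqrt : ℕ) : ℝ) - c ≤ (cnt (n / n.sqrt) k : ℝ) := by
      rcases le_or_gt c (n / n.sqrt) with h | h
      · have heq2 : ((n / n.sqrt - c : ℕ) : ℝ) = ((n / n.sqrt : ℕ) : ℝ) - c := by
          push_cast [Nat.cast_sub h]; ring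
        rw [← heq2]; exact_mod_cast hcnt
      · have hlt : ((n / n.sqrt : ℕ) : ℝ) - c < 0 := by
          have : ((n / n.sqrt : ℕ) : ℝ) < c := by exact_mod_cast h
          linarith
        have h2 : (0:ℝ) ≤ (cnt (n / n.sqrt) k : ℝ) := by positivity
        linarith
    have h2 : ((n.sqrt * (n / n.sqrt) : ℕ) : ℝ) - (c:ℝ) * n.sqrt
        ≤ ((n.sqrt * cnt (n / n.sqrt) k : ℕ) : ℝ) := by
      push_cast
      nlinarith [Nat.cast_nonneg (α := ℝ) n.sqrt]
    have heq : ((n.sqrt*(n/n.sqrt):ℕ):ℝ)/n - (c:ℝ)*((n.sqrt:ℝ)/n)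
        = (((n.sqrt*(n/n.sqrt):ℕ):ℝ) - (c:ℝ)*(n.sqrt:ℝ))/n := by field_simp
    rw [heq]
    exact div_le_div_of_nonneg_right h2 h0.le
  · filter_upwards [eventually_ge_atTop 1] with n hn
    have h0 : (0:ℝ) < n := by exact_mod_cast (by omega : 0 < n)
    refine div_le_div_of_nonneg_right ?_ h0.le
    exact_mod_cast Nat.mul_le_mul_left _ (cnt_le _ _)

/-- Parseval-type identity: for a finite linear combination `T = ∑_{(j,k) ∈ s} a_{jk} T_{jk}`,
the `G`-norm satisfies `‖T‖_G² = ∑_{(j,k) ∈ s} |a_{jk}|²`. -/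
theorem Gnorm_parseval (s : Finset (ℤ × ℤ)) (a : ℤ × ℤ → ℂ) (Top : ℤ × ℤ → H2 → H2)
    (hTop : ∀ jk ∈ s, IsTjk (Top jk) jk.1 jk.2) :
    Filter.Tendsto
      (fun n : ℕ => (1 / (n : ℝ)) * ∑ pr ∈ Bfin n, ‖∑ jk ∈ s, a jk • Top jk (bvec n pr)‖ ^ 2)
      atTop (nhds (∑ jk ∈ s, ‖a jk‖ ^ 2)) := by
  classical
  set D : ℕ := s.sup (fun x => s.sup (fun y => (y.1 - x.1).natAbs)) with hD
  have hev : ∀ᶠ n : ℕ in atTop,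
      (1 / (n : ℝ)) * ∑ pr ∈ Bfin n, ‖∑ jk ∈ s, a jk • Top jk (bvec n pr)‖ ^ 2
      = ∑ jk ∈ s, ‖a jk‖^2 * (((n.sqrt * cnt (n / n.sqrt) jk.2 : ℕ) : ℝ)/n) := by
    filter_upwards [sqrt_tendsto.eventually_ge_atTop (D+1), eventually_ge_atTop 1] with n hsq hn
    have hm1 : 1 ≤ n.sqrt := by omega
    have hbig : ∀ x ∈ s, ∀ y ∈ s, (y.1 - x.1).natAbs < n.sqrt := by
      intro x hx y hy
      have h1 : (y.1 - x.1).natAbs ≤ s.sup (fun z => (z.1 - x.1).natAbs) :=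
        Finset.le_sup (f := fun z => (z.1 - x.1).natAbs) hy
      have h2 : s.sup (fun z => (z.1 - x.1).natAbs) ≤ D :=
        Finset.le_sup (f := fun w => s.sup (fun z => (z.1 - w.1).natAbs)) hx
      omega
    rw [key s a Top hTop n hm1 hbig, Finset.mul_sum]
    refine Finset.sum_congr rfl fun jk _ => ?_
    push_cast
    ring
  have hev' : (fun n : ℕ => (1 / (n : ℝ)) * ∑ pr ∈ Bfin n, ‖∑ jk ∈ s, a jk • Top jk (bvec n pr)‖ ^ 2)
      =ᶠ[atTop] (fun n : ℕ => ∑ jk ∈ s, ‖a jk‖^2 * (((n.sqrt * cnt (n / n.sqrt) jk.2 : ℕ) : ℝ)/n)) := hev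
  refine Tendsto.congr' hev'.symm ?_
  have h := tendsto_finset_sum s
    (fun jk (_ : jk ∈ s) => ((cnt_tendsto jk.2).const_mul (‖a jk‖^2)))
  simpa using h
end
end

section
/- The linear map $\phi$ sending $\sum_{j,k} a_{jk} T_{jk}$ (finite sum) to $\sum_{j,k} a_{jk} e^{2\pi i j x} e^{i k t}$ is an isometry from the span $E$ of $\{T_{jk}\}$ with norm $\|\cdot\|_G$ into $L^2([0,1]\times[-\pi,\pi])$ with the normalized $L^2$ norm; hence its completion $\mathcal{G}$ is isometrically isomorphic to $L^2([0,1]\times[-\pi,\pi])$. -/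
open Filter Finset MeasureTheory
open scoped ENNReal

noncomputable section

-- ### integral computations

open intervalIntegral in
lemma int_t (d : ℤ) : (∫ t in (-Real.pi)..Real.pi, Complex.exp (Complex.I * d * t))
    = if d = 0 then (2 * Real.pi : ℂ) else 0 := by
  rcases eq_or_ne d 0 with h | h
  · simp [h, two_mul]
  · have hc : (Complex.I * d : ℂ) ≠ 0 := by
      simp [Complex.I_ne_zero, Complex.ext_iff]
      exact_mod_cast h
    rw [if_neg h, integral_exp_mul_complex hc]
    have : Complex.exp (Complex.I * d * Real.pi) = Complex.exp (Complex.I * d * (-Real.pi : ℝ)) := by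
      rw [Complex.exp_eq_exp_iff_exists_int]
      exact ⟨d, by push_cast; ring⟩
    rw [this, sub_self, zero_div]

open intervalIntegral in
lemma int_x (d : ℤ) : (∫ x in (0:ℝ)..1, Complex.exp (2 * Real.pi * Complex.I * d * x))
    = if d = 0 then (1 : ℂ) else 0 := by
  rcases eq_or_ne d 0 with h | h
  · simp [h]
  · have hc : (2 * Real.pi * Complex.I * d : ℂ) ≠ 0 := by
      refine mul_ne_zero (mul_ne_zero ?_ Complex.I_ne_zero) ?_
      · exact mul_ne_zero two_ne_zero (Complex.ofReal_ne_zero.2 Real.pi_ne_zero)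
      · exact_mod_cast h
    rw [if_neg h, integral_exp_mul_complex hc]
    have : Complex.exp (2 * Real.pi * Complex.I * d * (1:ℝ)) = Complex.exp (2 * Real.pi * Complex.I * d * (0:ℝ)) := by
      rw [Complex.exp_eq_exp_iff_exists_int]
      exact ⟨d, by push_cast; ring⟩
    rw [this, sub_self, zero_div]

lemma rhs_eq (s : Finset (ℤ × ℤ)) (a : ℤ × ℤ → ℂ) :
    ((1 / (2 * Real.pi)) * ∫ x in (0:ℝ)..1, ∫ t in (-Real.pi)..Real.pi,
        ‖∑ jk ∈ s, a jk * Complex.exp (2 * Real.pi * Complex.I * (jk.1 : ℂ) * (x : ℂ)) *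
          Complex.exp (Complex.I * (jk.2 : ℂ) * (t : ℂ))‖ ^ 2)
      = ∑ jk ∈ s, ‖a jk‖ ^ 2 := by
  have hpi : Real.pi ≠ 0 := Real.pi_ne_zero
  set g : ℝ → ℝ → ℂ := fun x t => ∑ jk ∈ s,
    a jk * Complex.exp (2 * Real.pi * Complex.I * (jk.1 : ℂ) * (x : ℂ)) *
      Complex.exp (Complex.I * (jk.2 : ℂ) * (t : ℂ)) with hg
  have hz2 : ∀ z : ℂ, ‖z‖^2 = (z * (starRingEnd ℂ) z).re := fun z => by
    rw [Complex.mul_conj, Complex.ofReal_re, Complex.normSq_eq_norm_sq]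
  have hgc : ∀ x : ℝ, Continuous (g x) := by
    intro x
    apply continuous_finset_sum
    intro u _
    fun_prop
  have hsplit_t : ∀ (k k' : ℤ) (t : ℝ),
      Complex.exp (Complex.I * (k:ℂ) * t) * (starRingEnd ℂ) (Complex.exp (Complex.I * (k':ℂ) * t))
        = Complex.exp (Complex.I * ((k - k' : ℤ):ℂ) * t) := by
    intro k k' t
    rw [← Complex.exp_conj, ← Complex.exp_add]
    congr 1
    simp only [map_mul, Complex.conj_I, Complex.conj_ofReal, map_intCast]
    push_cast
    ring
  have hsplit_x : ∀ (j j' : ℤ) (x : ℝ),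
      Complex.exp (2 * Real.pi * Complex.I * (j:ℂ) * x) *
          (starRingEnd ℂ) (Complex.exp (2 * Real.pi * Complex.I * (j':ℂ) * x))
        = Complex.exp (2 * Real.pi * Complex.I * ((j - j' : ℤ):ℂ) * x) := by
    intro j j' x
    rw [← Complex.exp_conj, ← Complex.exp_add]
    congr 1
    simp only [map_mul, Complex.conj_I, Complex.conj_ofReal, map_intCast, map_ofNat]
    push_cast
    ring
  have hpt : ∀ (u v : ℤ × ℤ) (x t : ℝ),
      (a u * Complex.exp (2 * Real.pi * Complex.I * (u.1:ℂ) * x) *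
          Complex.exp (Complex.I * (u.2:ℂ) * t)) *
        (starRingEnd ℂ) (a v * Complex.exp (2 * Real.pi * Complex.I * (v.1:ℂ) * x) *
          Complex.exp (Complex.I * (v.2:ℂ) * t))
      = (a u * (starRingEnd ℂ) (a v)) *
          Complex.exp (2 * Real.pi * Complex.I * ((u.1 - v.1 : ℤ):ℂ) * x) *
          Complex.exp (Complex.I * ((u.2 - v.2 : ℤ):ℂ) * t) := by
    intro u v x t
    calc (a u * Complex.exp (2 * Real.pi * Complex.I * (u.1:ℂ) * x) *
          Complex.exp (Complex.I * (u.2:ℂ) * t)) *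
        (starRingEnd ℂ) (a v * Complex.exp (2 * Real.pi * Complex.I * (v.1:ℂ) * x) *
          Complex.exp (Complex.I * (v.2:ℂ) * t))
        = (a u * (starRingEnd ℂ) (a v)) *
            (Complex.exp (2 * Real.pi * Complex.I * (u.1:ℂ) * x) *
              (starRingEnd ℂ) (Complex.exp (2 * Real.pi * Complex.I * (v.1:ℂ) * x))) *
            (Complex.exp (Complex.I * (u.2:ℂ) * t) *
              (starRingEnd ℂ) (Complex.exp (Complex.I * (v.2:ℂ) * t))) := by
          rw [map_mul, map_mul]; ring
      _ = _ := by rw [hsplit_x, hsplit_t]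
  have hexp : ∀ (x t : ℝ), g x t * (starRingEnd ℂ) (g x t)
      = ∑ u ∈ s, ∑ v ∈ s, (a u * (starRingEnd ℂ) (a v)) *
          Complex.exp (2 * Real.pi * Complex.I * ((u.1 - v.1 : ℤ):ℂ) * x) *
          Complex.exp (Complex.I * ((u.2 - v.2 : ℤ):ℂ) * t) := by
    intro x t
    rw [hg]
    dsimp only
    rw [map_sum, Finset.sum_mul_sum]
    exact Finset.sum_congr rfl fun u _ => Finset.sum_congr rfl fun v _ => hpt u v x t
  have hInner : ∀ x : ℝ, (∫ t in (-Real.pi)..Real.pi, ‖g x t‖^2)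
      = (∑ u ∈ s, ∑ v ∈ s, (a u * (starRingEnd ℂ) (a v)) *
          Complex.exp (2 * Real.pi * Complex.I * ((u.1 - v.1 : ℤ):ℂ) * x) *
          (if (u.2 - v.2 : ℤ) = 0 then (2 * Real.pi : ℂ) else 0)).re := by
    intro x
    have h1 : ∀ t : ℝ, ‖g x t‖^2 = (g x t * (starRingEnd ℂ) (g x t)).re := fun t => hz2 _
    rw [intervalIntegral.integral_congr (fun t _ => h1 t)]
    have hInt : IntervalIntegrable (fun t => g x t * (starRingEnd ℂ) (g x t))
        MeasureTheory.volume (-Real.pi) Real.pi :=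
      ((hgc x).mul (continuous_star.comp (hgc x))).intervalIntegrable _ _
    rw [show (fun t : ℝ => (g x t * (starRingEnd ℂ) (g x t)).re)
        = fun t : ℝ => Complex.reCLM (g x t * (starRingEnd ℂ) (g x t)) from rfl]
    rw [Complex.reCLM.intervalIntegral_comp_comm hInt]
    have hval : (∫ t in (-Real.pi)..Real.pi, g x t * (starRingEnd ℂ) (g x t))
        = ∑ u ∈ s, ∑ v ∈ s, (a u * (starRingEnd ℂ) (a v)) *
            Complex.exp (2 * Real.pi * Complex.I * ((u.1 - v.1 : ℤ):ℂ) * x) *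
            (if (u.2 - v.2 : ℤ) = 0 then (2 * Real.pi : ℂ) else 0) := by
      rw [intervalIntegral.integral_congr (fun t _ => hexp x t)]
      rw [intervalIntegral.integral_finset_sum (fun u (_ : u ∈ s) =>
        (continuous_finset_sum s (fun v _ => by fun_prop)).intervalIntegrable _ _)]
      refine Finset.sum_congr rfl fun u hu => ?_
      rw [intervalIntegral.integral_finset_sum (fun v (_ : v ∈ s) =>
        (by fun_prop : Continuous fun t : ℝ => (a u * (starRingEnd ℂ) (a v)) *
          Complex.exp (2 * Real.pi * Complex.I * ((u.1 - v.1 : ℤ):ℂ) * x) *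
          Complex.exp (Complex.I * ((u.2 - v.2 : ℤ):ℂ) * t)).intervalIntegrable _ _)]
      refine Finset.sum_congr rfl fun v hv => ?_
      rw [intervalIntegral.integral_const_mul, int_t (u.2 - v.2)]
    rw [hval]
    rfl
  have hOuter : (∫ x in (0:ℝ)..1, (∑ u ∈ s, ∑ v ∈ s, (a u * (starRingEnd ℂ) (a v)) *
          Complex.exp (2 * Real.pi * Complex.I * ((u.1 - v.1 : ℤ):ℂ) * x) *
          (if (u.2 - v.2 : ℤ) = 0 then (2 * Real.pi : ℂ) else 0)).re)
      = (∑ u ∈ s, (a u * (starRingEnd ℂ) (a u)) * (2 * Real.pi : ℂ)).re := by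
    have hScont : ∀ u v : ℤ × ℤ, Continuous (fun x : ℝ => (a u * (starRingEnd ℂ) (a v)) *
        Complex.exp (2 * Real.pi * Complex.I * ((u.1 - v.1 : ℤ):ℂ) * x) *
        (if (u.2 - v.2 : ℤ) = 0 then (2 * Real.pi : ℂ) else 0)) := by
      intro u v
      apply Continuous.mul _ continuous_const
      fun_prop
    have hIntS : IntervalIntegrable (fun x : ℝ => ∑ u ∈ s, ∑ v ∈ s,
        (a u * (starRingEnd ℂ) (a v)) *
          Complex.exp (2 * Real.pi * Complex.I * ((u.1 - v.1 : ℤ):ℂ) * x) *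
          (if (u.2 - v.2 : ℤ) = 0 then (2 * Real.pi : ℂ) else 0))
        MeasureTheory.volume 0 1 :=
      (continuous_finset_sum s fun u _ =>
        continuous_finset_sum s fun v _ => hScont u v).intervalIntegrable _ _
    rw [show (fun x : ℝ => (∑ u ∈ s, ∑ v ∈ s, (a u * (starRingEnd ℂ) (a v)) *
          Complex.exp (2 * Real.pi * Complex.I * ((u.1 - v.1 : ℤ):ℂ) * x) *
          (if (u.2 - v.2 : ℤ) = 0 then (2 * Real.pi : ℂ) else 0)).re)
        = fun x : ℝ => Complex.reCLM (∑ u ∈ s, ∑ v ∈ s, (a u * (starRingEnd ℂ) (a v)) *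
          Complex.exp (2 * Real.pi * Complex.I * ((u.1 - v.1 : ℤ):ℂ) * x) *
          (if (u.2 - v.2 : ℤ) = 0 then (2 * Real.pi : ℂ) else 0)) from rfl]
    rw [Complex.reCLM.intervalIntegral_comp_comm hIntS]
    have hintval : (∫ x in (0:ℝ)..1, ∑ u ∈ s, ∑ v ∈ s, (a u * (starRingEnd ℂ) (a v)) *
          Complex.exp (2 * Real.pi * Complex.I * ((u.1 - v.1 : ℤ):ℂ) * x) *
          (if (u.2 - v.2 : ℤ) = 0 then (2 * Real.pi : ℂ) else 0))
        = ∑ u ∈ s, (a u * (starRingEnd ℂ) (a u)) * (2 * Real.pi : ℂ) := by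
     rw [intervalIntegral.integral_finset_sum (fun u (_ : u ∈ s) =>
      (continuous_finset_sum s fun v _ => hScont u v).intervalIntegrable _ _)]
     refine Finset.sum_congr rfl fun u hu => ?_
     rw [intervalIntegral.integral_finset_sum (fun v (_ : v ∈ s) =>
      (hScont u v).intervalIntegrable _ _)]
     have hterm : ∀ v ∈ s, (∫ x in (0:ℝ)..1, (a u * (starRingEnd ℂ) (a v)) *
          Complex.exp (2 * Real.pi * Complex.I * ((u.1 - v.1 : ℤ):ℂ) * x) *
          (if (u.2 - v.2 : ℤ) = 0 then (2 * Real.pi : ℂ) else 0))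
        = if v = u then (a u * (starRingEnd ℂ) (a u)) * (2 * Real.pi : ℂ) else 0 := by
       intro v _
       have harr : (fun x : ℝ => (a u * (starRingEnd ℂ) (a v)) *
             Complex.exp (2 * Real.pi * Complex.I * ((u.1 - v.1 : ℤ):ℂ) * x) *
             (if (u.2 - v.2 : ℤ) = 0 then (2 * Real.pi : ℂ) else 0))
           = fun x : ℝ => ((a u * (starRingEnd ℂ) (a v)) *
             (if (u.2 - v.2 : ℤ) = 0 then (2 * Real.pi : ℂ) else 0)) *
             Complex.exp (2 * Real.pi * Complex.I * ((u.1 - v.1 : ℤ):ℂ) * x) := by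
         funext x; ring
       rw [harr, intervalIntegral.integral_const_mul, int_x (u.1 - v.1)]
       rcases eq_or_ne v u with rfl | hvu
       · simp
       · rw [if_neg hvu]
         have hne : u.1 - v.1 ≠ 0 ∨ u.2 - v.2 ≠ 0 := by
           by_contra hc
           push_neg at hc
           exact hvu (Prod.ext (by omega) (by omega))
         rcases hne with h | h
         · rw [if_neg h, mul_zero]
         · rw [if_neg h]
           simp
     rw [Finset.sum_congr rfl hterm,
       Finset.sum_ite_eq' s u (fun _ => (a u * (starRingEnd ℂ) (a u)) * (2 * Real.pi : ℂ)),
       if_pos hu]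
    rw [hintval]
    rfl
  calc (1 / (2 * Real.pi)) * ∫ x in (0:ℝ)..1, ∫ t in (-Real.pi)..Real.pi,
        ‖∑ jk ∈ s, a jk * Complex.exp (2 * Real.pi * Complex.I * (jk.1 : ℂ) * (x : ℂ)) *
          Complex.exp (Complex.I * (jk.2 : ℂ) * (t : ℂ))‖ ^ 2
      = (1 / (2 * Real.pi)) * ∫ x in (0:ℝ)..1, (∑ u ∈ s, ∑ v ∈ s,
          (a u * (starRingEnd ℂ) (a v)) *
          Complex.exp (2 * Real.pi * Complex.I * ((u.1 - v.1 : ℤ):ℂ) * x) *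
          (if (u.2 - v.2 : ℤ) = 0 then (2 * Real.pi : ℂ) else 0)).re := by
        congr 1
        exact intervalIntegral.integral_congr fun x _ => hInner x
    _ = (1 / (2 * Real.pi)) * (∑ u ∈ s, (a u * (starRingEnd ℂ) (a u)) * (2 * Real.pi : ℂ)).re := by
        rw [hOuter]
    _ = ∑ jk ∈ s, ‖a jk‖ ^ 2 := by
        rw [Complex.re_sum, Finset.mul_sum]
        refine Finset.sum_congr rfl fun u hu => ?_
        have hval2 : ((a u * (starRingEnd ℂ) (a u)) * (2 * Real.pi : ℂ)).re
            = ‖a u‖^2 * (2 * Real.pi) := by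
          rw [Complex.mul_conj]
          rw [show ((Complex.normSq (a u) : ℂ)) * (2 * (Real.pi:ℂ))
            = (((Complex.normSq (a u) * (2 * Real.pi) : ℝ)):ℂ) by push_cast; ring]
          rw [Complex.ofReal_re, Complex.normSq_eq_norm_sq]
        rw [hval2]
        field_simp

-- ### limit lemmas

lemma nat_sqrt_tendsto : Tendsto (fun n : ℕ => Nat.sqrt n) atTop atTop := by
  apply tendsto_atTop_atTop.2
  intro b
  exact ⟨b * b, fun n hn => Nat.le_sqrt.2 hn⟩

lemma lim1 : Tendsto (fun n : ℕ => (Nat.sqrt n : ℝ) / n) atTop (nhds 0) := by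
  have hb : Tendsto (fun n : ℕ => 1 / (Nat.sqrt n : ℝ)) atTop (nhds 0) := by
    simp only [one_div]
    exact (tendsto_natCast_atTop_atTop.comp nat_sqrt_tendsto).inv_tendsto_atTop
  apply tendsto_of_tendsto_of_tendsto_of_le_of_le' tendsto_const_nhds hb
  · filter_upwards [eventually_ge_atTop 1] with n hn
    positivity
  · filter_upwards [eventually_ge_atTop 1] with n hn
    have hm0 : 0 < Nat.sqrt n := Nat.sqrt_pos.2 hn
    have hm0' : (0:ℝ) < (Nat.sqrt n : ℝ) := by exact_mod_cast hm0
    have h1 : (Nat.sqrt n : ℝ) / n ≤ (Nat.sqrt n : ℝ) / ((Nat.sqrt n : ℝ) * (Nat.sqrt n : ℝ)) := by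
      apply div_le_div_of_nonneg_left hm0'.le (by positivity)
      exact_mod_cast Nat.sqrt_le n
    calc (Nat.sqrt n : ℝ) / n ≤ (Nat.sqrt n : ℝ) / ((Nat.sqrt n : ℝ) * (Nat.sqrt n : ℝ)) := h1
      _ = 1 / (Nat.sqrt n : ℝ) := by field_simp

lemma lim2 : Tendsto (fun n : ℕ => ((n % Nat.sqrt n : ℕ) : ℝ) / n) atTop (nhds 0) := by
  apply tendsto_of_tendsto_of_tendsto_of_le_of_le' tendsto_const_nhds lim1
  · filter_upwards with n; positivity
  · filter_upwards [eventually_ge_atTop 1] with n hn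
    have hm0 : 0 < Nat.sqrt n := Nat.sqrt_pos.2 hn
    have hmm : (n % Nat.sqrt n : ℕ) ≤ Nat.sqrt n := (Nat.mod_lt n hm0).le
    exact div_le_div_of_nonneg_right (by exact_mod_cast hmm) (by positivity)

lemma lim3 : Tendsto (fun n : ℕ => ((n / Nat.sqrt n * Nat.sqrt n : ℕ) : ℝ) / n) atTop (nhds 1) := by
  have key : ∀ᶠ n : ℕ in atTop, (1:ℝ) - ((n % Nat.sqrt n : ℕ) : ℝ) / n
      = ((n / Nat.sqrt n * Nat.sqrt n : ℕ) : ℝ) / n := by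
    filter_upwards [eventually_ge_atTop 1] with n hn
    have hn0 : (n:ℝ) ≠ 0 := Nat.cast_ne_zero.2 (by omega)
    have hmod : (n / Nat.sqrt n * Nat.sqrt n : ℕ) = n - n % Nat.sqrt n := by
      have h := Nat.div_add_mod n (Nat.sqrt n)
      rw [mul_comm]
      omega
    rw [hmod, Nat.cast_sub (Nat.mod_le n _)]
    field_simp
  apply Tendsto.congr' key ?_
  simpa using tendsto_const_nhds.sub lim2

lemma lim4 (K : ℕ) :
    Tendsto (fun n : ℕ => (((n / Nat.sqrt n - K) * Nat.sqrt n : ℕ) : ℝ) / n) atTop (nhds 1) := by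
  have hqK : ∀ᶠ n : ℕ in atTop, K ≤ n / Nat.sqrt n := by
    have h1 : ∀ᶠ n : ℕ in atTop, K ≤ Nat.sqrt n := nat_sqrt_tendsto.eventually_ge_atTop K
    filter_upwards [h1, eventually_ge_atTop 1] with n hn hn1
    have hm0 : 0 < Nat.sqrt n := Nat.sqrt_pos.2 hn1
    exact hn.trans ((Nat.le_div_iff_mul_le hm0).2 (Nat.sqrt_le n))
  have key : ∀ᶠ n : ℕ in atTop,
      ((n / Nat.sqrt n * Nat.sqrt n : ℕ) : ℝ) / n - (K:ℝ) * ((Nat.sqrt n : ℝ) / n)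
        = (((n / Nat.sqrt n - K) * Nat.sqrt n : ℕ) : ℝ) / n := by
    filter_upwards [hqK] with n hn
    have h2 : ((n / Nat.sqrt n - K) * Nat.sqrt n : ℕ)
        = (n / Nat.sqrt n * Nat.sqrt n : ℕ) - K * Nat.sqrt n := by
      rw [Nat.sub_mul]
    rw [h2, Nat.cast_sub (Nat.mul_le_mul_right _ hn)]
    push_cast
    ring
  apply Tendsto.congr' key ?_
  simpa using lim3.sub (lim1.const_mul (K:ℝ))

-- ### lp computations

lemma inner_single_single (i i' : Iq × ℕ) :
    (inner ℂ (lp.single 2 i (1:ℂ) : H2) (lp.single 2 i' (1:ℂ) : H2) : ℂ) = if i = i' then 1 else 0 := by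
  rw [lp.inner_single_left]
  rcases eq_or_ne i i' with h | h
  · subst h; simp [lp.single_apply_self, RCLike.inner_apply]
  · simp [lp.single_apply_ne (E := fun _ : Iq × ℕ => ℂ) 2 i' 1 h, h, RCLike.inner_apply]

lemma roots_sum (d : ℤ) (m : ℕ) (hd : d.natAbs < m) :
    ∑ p ∈ Icc 1 m, Complex.exp (2 * Real.pi * Complex.I * (d : ℂ) * ((p : ℂ) / (m : ℂ)))
      = if d = 0 then (m : ℂ) else 0 := by
  have hm : 0 < m := lt_of_le_of_lt (Nat.zero_le _) hd
  have hmC : (m : ℂ) ≠ 0 := Nat.cast_ne_zero.2 hm.ne'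
  rcases eq_or_ne d 0 with h | h
  · simp [h, Nat.card_Icc]
  · rw [if_neg h]
    set ω : ℂ := Complex.exp (2 * Real.pi * Complex.I * (d : ℂ) / (m : ℂ)) with hω
    have hpow : ∀ p : ℕ, Complex.exp (2 * Real.pi * Complex.I * (d : ℂ) * ((p : ℂ) / (m : ℂ))) = ω ^ p := by
      intro p
      rw [hω, ← Complex.exp_nat_mul]
      ring_nf
    have hω1 : ω ≠ 1 := by
      rw [hω, Ne, Complex.exp_eq_one_iff]
      rintro ⟨k, hk⟩
      have h2 : (2 * Real.pi * Complex.I : ℂ) ≠ 0 :=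
        mul_ne_zero (mul_ne_zero two_ne_zero (Complex.ofReal_ne_zero.2 Real.pi_ne_zero))
          Complex.I_ne_zero
      have hk' : 2 * (Real.pi:ℂ) * Complex.I * (d:ℂ) = (k:ℂ) * (2 * Real.pi * Complex.I) * m :=
        (div_eq_iff hmC).mp hk
      have : (d : ℂ) = (k : ℂ) * (m : ℂ) := by
        apply mul_left_cancel₀ h2
        rw [hk']; ring
      have : d = k * m := by exact_mod_cast this
      rcases eq_or_ne k 0 with rfl | hk0
      · simp at this; exact h this
      · have : m ≤ d.natAbs := by
          rw [this]
          calc (m:ℕ) = 1 * m := (one_mul m).symm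
          _ ≤ k.natAbs * m := by
            exact Nat.mul_le_mul_right m (Int.one_le_abs (by exact_mod_cast hk0) |>.trans_eq (Int.abs_eq_natAbs k) |> fun h' => by exact_mod_cast h')
          _ = (k * m : ℤ).natAbs := by rw [Int.natAbs_mul, Int.natAbs_natCast]
        omega
    have hωm : ω ^ m = 1 := by
      rw [hω, ← Complex.exp_nat_mul]
      have : (m : ℂ) * (2 * Real.pi * Complex.I * (d : ℂ) / (m : ℂ)) = (d : ℂ) * (2 * Real.pi * Complex.I) := by
        field_simp
      rw [this, Complex.exp_int_mul_two_pi_mul_I]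
    have hins : insert 0 (Icc 1 m) = range (m + 1) := by
      ext x; simp [Nat.lt_succ_iff]; omega
    have hsum : ∑ p ∈ range (m+1), ω ^ p = ω ^ 0 + ∑ p ∈ Icc 1 m, ω ^ p := by
      rw [← hins, Finset.sum_insert (by simp)]
    have hgeom : ∑ p ∈ range (m+1), ω ^ p = (ω ^ (m+1) - 1) / (ω - 1) := geom_sum_eq hω1 (m+1)
    have : (ω ^ (m+1) - 1) / (ω - 1) = 1 := by
      rw [pow_succ, hωm, one_mul, div_eq_one_iff_eq (sub_ne_zero.2 hω1)]
    simp only [hpow]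
    have := hsum.symm.trans (hgeom.trans this)
    simp at this
    linear_combination this

lemma norm_exp_jl (j : ℤ) (l : ℚ) :
    ‖Complex.exp (2 * Real.pi * Complex.I * (j:ℂ) * (l:ℂ))‖ = 1 := by
  have h : (2 * Real.pi * Complex.I * (j:ℂ) * (l:ℂ)) = ((2 * Real.pi * j * l : ℝ) : ℂ) * Complex.I := by
    push_cast; ring
  rw [h, Complex.norm_exp_ofReal_mul_I]

section ops
variable (s : Finset (ℤ × ℤ)) (a : ℤ × ℤ → ℂ) (Top : ℤ × ℤ → H2 → H2)

lemma Tapply (hTop : ∀ jk ∈ s, IsTjk (Top jk) jk.1 jk.2) (l : ℚ) (hl : 0 < l ∧ l ≤ 1) (r : ℕ) (hr : ∀ jk ∈ s, 0 ≤ (r:ℤ) + jk.2) :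
    (∑ jk ∈ s, a jk • Top jk (basisVec l r)) =
      ∑ jk ∈ s, (a jk * Complex.exp (2 * Real.pi * Complex.I * (jk.1:ℂ) * (l:ℂ))) •
        (lp.single 2 ((⟨l,hl⟩ : Iq), ((r:ℤ)+jk.2).toNat) (1:ℂ) : H2) := by
  refine Finset.sum_congr rfl fun jk hjk => ?_
  rw [hTop jk hjk l r, if_pos (hr jk hjk)]
  rw [smul_smul]
  congr 1
  rw [basisVec, dif_pos hl]

lemma normsq (hTop : ∀ jk ∈ s, IsTjk (Top jk) jk.1 jk.2) (l : ℚ) (hl : 0 < l ∧ l ≤ 1) (r : ℕ) (hr : ∀ jk ∈ s, 0 ≤ (r:ℤ) + jk.2) :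
    ‖∑ jk ∈ s, a jk • Top jk (basisVec l r)‖^2 =
      (∑ u ∈ s, ∑ v ∈ s, if u.2 = v.2 then
        (starRingEnd ℂ) (a u) * a v *
          Complex.exp (2 * Real.pi * Complex.I * ((v.1 - u.1 : ℤ):ℂ) * (l:ℂ)) else 0).re := by
  have key : (inner ℂ (∑ jk ∈ s, a jk • Top jk (basisVec l r))
      (∑ jk ∈ s, a jk • Top jk (basisVec l r)) : ℂ) = ∑ u ∈ s, ∑ v ∈ s, if u.2 = v.2 then
        (starRingEnd ℂ) (a u) * a v *
          Complex.exp (2 * Real.pi * Complex.I * ((v.1 - u.1 : ℤ):ℂ) * (l:ℂ)) else 0 := by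
    rw [Tapply s a Top hTop l hl r hr, sum_inner]
    refine Finset.sum_congr rfl fun u hu => ?_
    rw [inner_sum]
    refine Finset.sum_congr rfl fun v hv => ?_
    rw [inner_smul_left, inner_smul_right, inner_single_single]
    have hidx : ((⟨l,hl⟩ : Iq), ((r:ℤ)+u.2).toNat) = ((⟨l,hl⟩ : Iq), ((r:ℤ)+v.2).toNat) ↔ u.2 = v.2 := by
      constructor
      · intro h
        have h2 := (Prod.mk.injEq _ _ _ _).mp h |>.2
        have h3 := congrArg (fun x : ℕ => (x:ℤ)) h2
        simp only [Int.toNat_of_nonneg (hr u hu), Int.toNat_of_nonneg (hr v hv)] at h3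
        omega
      · intro h; rw [h]
    simp only [hidx]
    split_ifs with h
    · have hconjexp : (starRingEnd ℂ) (Complex.exp (2 * Real.pi * Complex.I * (u.1:ℂ) * (l:ℂ)))
          = Complex.exp (-(2 * Real.pi * Complex.I * (u.1:ℂ) * (l:ℂ))) := by
        rw [← Complex.exp_conj]
        congr 1
        simp only [map_mul, map_neg, Complex.conj_I, Complex.conj_ofReal, map_ofNat, map_intCast]
        push_cast
        rw [← Complex.ofReal_ratCast, Complex.conj_ofReal]
        ring
      rw [map_mul, hconjexp, mul_one]
      have hmerge : Complex.exp (-(2 * Real.pi * Complex.I * (u.1:ℂ) * (l:ℂ))) *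
          Complex.exp (2 * Real.pi * Complex.I * (v.1:ℂ) * (l:ℂ))
          = Complex.exp (2 * Real.pi * Complex.I * ((v.1 - u.1 : ℤ):ℂ) * (l:ℂ)) := by
        rw [← Complex.exp_add]; congr 1; push_cast; ring
      calc (starRingEnd ℂ) (a u) * Complex.exp (-(2 * Real.pi * Complex.I * (u.1:ℂ) * (l:ℂ))) *
            (a v * Complex.exp (2 * Real.pi * Complex.I * (v.1:ℂ) * (l:ℂ)))
          = (starRingEnd ℂ) (a u) * a v *
            (Complex.exp (-(2 * Real.pi * Complex.I * (u.1:ℂ) * (l:ℂ))) *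
              Complex.exp (2 * Real.pi * Complex.I * (v.1:ℂ) * (l:ℂ))) := by ring
        _ = _ := by rw [hmerge]
    · simp
  rw [← inner_self_eq_norm_sq (𝕜 := ℂ), key, RCLike.re_to_complex]

lemma norm_T_le (hTop : ∀ jk ∈ s, IsTjk (Top jk) jk.1 jk.2) (n : ℕ) (pr : ℕ × ℕ) :
    ‖∑ jk ∈ s, a jk • Top jk (bvec n pr)‖ ≤ ∑ u ∈ s, ‖a u‖ := by
  refine (norm_sum_le _ _).trans (Finset.sum_le_sum fun jk hjk => ?_)
  rw [norm_smul]
  have h1 : ‖Top jk (bvec n pr)‖ ≤ 1 := by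
    rw [bvec, hTop jk hjk]
    split_ifs with h
    · rw [norm_smul]
      rw [norm_exp_jl jk.1 ((pr.1:ℚ)/(Nat.sqrt n : ℚ)), one_mul, basisVec]
      split_ifs with h2
      · rw [lp.norm_single (p := 2) (by norm_num)]
        simp
      · simp
    · simp
  calc ‖a jk‖ * ‖Top jk (bvec n pr)‖ ≤ ‖a jk‖ * 1 :=
        mul_le_mul_of_nonneg_left h1 (norm_nonneg _)
    _ = ‖a jk‖ := mul_one _

lemma sum_p (hTop : ∀ jk ∈ s, IsTjk (Top jk) jk.1 jk.2) (n : ℕ) (hm : (s.sup fun u => u.1.natAbs) * 2 < Nat.sqrt n) (r : ℕ)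
    (hr : ∀ jk ∈ s, 0 ≤ (r:ℤ) + jk.2) :
    ∑ p ∈ Icc 1 (Nat.sqrt n), ‖∑ jk ∈ s, a jk • Top jk (bvec n (p, r))‖^2
      = (Nat.sqrt n : ℝ) * ∑ u ∈ s, ‖a u‖^2 := by
  have hm0 : 0 < Nat.sqrt n := lt_of_le_of_lt (Nat.zero_le _) hm
  set m := Nat.sqrt n with hmdef
  have hsum : ∀ p ∈ Icc 1 m, ‖∑ jk ∈ s, a jk • Top jk (bvec n (p, r))‖^2
      = (∑ u ∈ s, ∑ v ∈ s, if u.2 = v.2 then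
          (starRingEnd ℂ) (a u) * a v *
            Complex.exp (2 * Real.pi * Complex.I * ((v.1 - u.1 : ℤ):ℂ)
              * ((((p:ℚ)/(m:ℚ)):ℚ):ℂ)) else 0).re := by
    intro p hp
    rw [mem_Icc] at hp
    have hl : 0 < ((p:ℚ)/(m:ℚ)) ∧ ((p:ℚ)/(m:ℚ)) ≤ 1 := by
      constructor
      · apply div_pos
        · exact_mod_cast hp.1
        · exact_mod_cast hm0
      · rw [div_le_one (by exact_mod_cast hm0)]
        exact_mod_cast hp.2
    exact normsq s a Top hTop _ hl r hr
  rw [Finset.sum_congr rfl hsum, ← Complex.re_sum]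
  have hz : ∀ z : ℂ, ((starRingEnd ℂ) z * z).re = ‖z‖^2 := fun z => by
    rw [mul_comm, Complex.mul_conj, Complex.ofReal_re, Complex.normSq_eq_norm_sq]
  have key : (∑ p ∈ Icc 1 m, ∑ u ∈ s, ∑ v ∈ s, if u.2 = v.2 then
          (starRingEnd ℂ) (a u) * a v *
            Complex.exp (2 * Real.pi * Complex.I * ((v.1 - u.1 : ℤ):ℂ)
              * ((((p:ℚ)/(m:ℚ)):ℚ):ℂ)) else 0)
      = ∑ u ∈ s, (m:ℂ) * ((starRingEnd ℂ) (a u) * a u) := by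
    rw [Finset.sum_comm]
    refine Finset.sum_congr rfl fun u hu => ?_
    rw [Finset.sum_comm]
    have hinner : ∀ v ∈ s, (∑ p ∈ Icc 1 m, if u.2 = v.2 then
          (starRingEnd ℂ) (a u) * a v *
            Complex.exp (2 * Real.pi * Complex.I * ((v.1 - u.1 : ℤ):ℂ)
              * ((((p:ℚ)/(m:ℚ)):ℚ):ℂ)) else 0)
        = if v = u then (m:ℂ) * ((starRingEnd ℂ) (a u) * a u) else 0 := by
      intro v hv
      have hcast : ∀ p : ℕ, ((((p:ℚ)/(m:ℚ)):ℚ):ℂ) = (p:ℂ)/(m:ℂ) := by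
        intro p; push_cast; ring
      by_cases h2 : u.2 = v.2
      · simp only [if_pos h2, hcast, ← Finset.mul_sum]
        have hbound : (v.1 - u.1 : ℤ).natAbs < m := by
          have h1 : u.1.natAbs ≤ s.sup fun w => w.1.natAbs :=
            Finset.le_sup (f := fun w : ℤ × ℤ => w.1.natAbs) hu
          have h2' : v.1.natAbs ≤ s.sup fun w => w.1.natAbs :=
            Finset.le_sup (f := fun w : ℤ × ℤ => w.1.natAbs) hv
          have := Int.natAbs_sub_le v.1 u.1
          omega
        rw [roots_sum _ _ hbound]
        by_cases h1 : v = u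
        · subst h1; simp; ring
        · have hne : v.1 - u.1 ≠ 0 := by
            intro hc
            apply h1
            have : v.1 = u.1 := by omega
            exact Prod.ext this h2.symm
          rw [if_neg hne, if_neg h1, mul_zero]
      · have hvu : v ≠ u := fun hc => h2 (by rw [hc])
        simp [h2, hvu]
    rw [Finset.sum_congr rfl hinner, Finset.sum_ite_eq' s u
      (fun _ => (m:ℂ) * ((starRingEnd ℂ) (a u) * a u)), if_pos hu]
  rw [key, Complex.re_sum, Finset.mul_sum]
  refine Finset.sum_congr rfl fun u hu => ?_
  have hre : ((m:ℂ) * ((starRingEnd ℂ) (a u) * a u)).re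
      = (m:ℝ) * (((starRingEnd ℂ) (a u) * a u)).re := by
    simp [Complex.mul_re]
  rw [hre, hz]

end ops

/-- The map `φ : ∑ a_{jk} T_{jk} ↦ ∑ a_{jk} e^{2πijx} e^{ikt}` is an isometry from the span `E`
of the `T_{jk}` (with the `G`-norm) into `L²([0,1]×[-π,π])` with the normalized `L²` norm:
`‖T‖_G² = (1/2π) ∫₀¹ ∫_{-π}^{π} |φ(T)(x,t)|² dt dx`; hence the completion `𝒢` of `E` is
isometrically isomorphic to `L²([0,1]×[-π,π])`. -/
theorem phi_isometry (s : Finset (ℤ × ℤ)) (a : ℤ × ℤ → ℂ) (Top : ℤ × ℤ → H2 → H2)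
    (hTop : ∀ jk ∈ s, IsTjk (Top jk) jk.1 jk.2) :
    Filter.Tendsto
      (fun n : ℕ => (1 / (n : ℝ)) * ∑ pr ∈ Bfin n, ‖∑ jk ∈ s, a jk • Top jk (bvec n pr)‖ ^ 2)
      atTop
      (nhds ((1 / (2 * Real.pi)) * ∫ x in (0:ℝ)..1, ∫ t in (-Real.pi)..Real.pi,
        ‖∑ jk ∈ s, a jk * Complex.exp (2 * Real.pi * Complex.I * (jk.1 : ℂ) * (x : ℂ)) *
          Complex.exp (Complex.I * (jk.2 : ℂ) * (t : ℂ))‖ ^ 2)) := by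
  rw [rhs_eq s a]
  set A : ℝ := ∑ jk ∈ s, ‖a jk‖ ^ 2 with hA
  have hA0 : 0 ≤ A := Finset.sum_nonneg fun u _ => sq_nonneg _
  set Bd : ℝ := (∑ u ∈ s, ‖a u‖) ^ 2 with hBd
  have hBd0 : 0 ≤ Bd := sq_nonneg _
  set K : ℕ := s.sup fun u => u.2.natAbs with hK
  have hgBd : ∀ n pr, ‖∑ jk ∈ s, a jk • Top jk (bvec n pr)‖ ^ 2 ≤ Bd := fun n pr =>
    pow_le_pow_left₀ (norm_nonneg _) (norm_T_le s a Top hTop n pr) 2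
  have hrK : ∀ r : ℕ, K ≤ r → ∀ jk ∈ s, 0 ≤ (r:ℤ) + jk.2 := by
    intro r hKr jk hjk
    have h1 : jk.2.natAbs ≤ K := Finset.le_sup (f := fun u : ℤ × ℤ => u.2.natAbs) hjk
    omega
  have hEv : ∀ᶠ n : ℕ in atTop,
      ((s.sup fun u => u.1.natAbs) * 2 < Nat.sqrt n ∧ K ≤ n / Nat.sqrt n) ∧ 1 ≤ n := by
    have h1 : ∀ᶠ n : ℕ in atTop, (s.sup fun u => u.1.natAbs) * 2 + 1 ≤ Nat.sqrt n :=
      nat_sqrt_tendsto.eventually_ge_atTop _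
    have h2 : ∀ᶠ n : ℕ in atTop, K ≤ Nat.sqrt n := nat_sqrt_tendsto.eventually_ge_atTop _
    filter_upwards [h1, h2, eventually_ge_atTop 1] with n ha hb hc
    refine ⟨⟨by omega, ?_⟩, hc⟩
    have hm0 : 0 < Nat.sqrt n := by omega
    exact hb.trans ((Nat.le_div_iff_mul_le hm0).2 (Nat.sqrt_le n))
  have hsand : ∀ᶠ n : ℕ in atTop,
      (((n / Nat.sqrt n - K) * Nat.sqrt n : ℕ) : ℝ) / n * A
        ≤ (1/(n:ℝ)) * ∑ pr ∈ Bfin n, ‖∑ jk ∈ s, a jk • Top jk (bvec n pr)‖ ^ 2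
      ∧ (1/(n:ℝ)) * ∑ pr ∈ Bfin n, ‖∑ jk ∈ s, a jk • Top jk (bvec n pr)‖ ^ 2
        ≤ (((n / Nat.sqrt n - K) * Nat.sqrt n : ℕ) : ℝ) / n * A
          + (K:ℝ) * Bd * ((Nat.sqrt n : ℝ) / n) := by
    filter_upwards [hEv] with n hn
    obtain ⟨⟨hJn, hKq⟩, hn1⟩ := hn
    have hn0 : (0:ℝ) < n := by exact_mod_cast (by omega : 0 < n)
    have hsum_eq : ∑ pr ∈ Bfin n, ‖∑ jk ∈ s, a jk • Top jk (bvec n pr)‖ ^ 2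
        = ∑ r ∈ range (n / Nat.sqrt n), ∑ p ∈ Icc 1 (Nat.sqrt n),
            ‖∑ jk ∈ s, a jk • Top jk (bvec n (p, r))‖ ^ 2 := by
      rw [Bfin, Finset.sum_product]
      exact Finset.sum_comm
    have hsplit : ∑ r ∈ range (n / Nat.sqrt n), ∑ p ∈ Icc 1 (Nat.sqrt n),
            ‖∑ jk ∈ s, a jk • Top jk (bvec n (p, r))‖ ^ 2
        = (∑ r ∈ range K, ∑ p ∈ Icc 1 (Nat.sqrt n),
            ‖∑ jk ∈ s, a jk • Top jk (bvec n (p, r))‖ ^ 2)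
          + ∑ r ∈ Ico K (n / Nat.sqrt n), ∑ p ∈ Icc 1 (Nat.sqrt n),
            ‖∑ jk ∈ s, a jk • Top jk (bvec n (p, r))‖ ^ 2 := by
      rw [range_eq_Ico, ← Finset.sum_Ico_consecutive _ (Nat.zero_le K) hKq, ← range_eq_Ico]
    have hmain : ∑ r ∈ Ico K (n / Nat.sqrt n), ∑ p ∈ Icc 1 (Nat.sqrt n),
            ‖∑ jk ∈ s, a jk • Top jk (bvec n (p, r))‖ ^ 2
        = ((n / Nat.sqrt n - K : ℕ) : ℝ) * ((Nat.sqrt n : ℝ) * A) := by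
      rw [Finset.sum_congr rfl (fun r hr =>
        sum_p s a Top hTop n hJn r (hrK r (Finset.mem_Ico.1 hr).1))]
      rw [Finset.sum_const, Nat.card_Ico, nsmul_eq_mul]
    have hE0 : 0 ≤ ∑ r ∈ range K, ∑ p ∈ Icc 1 (Nat.sqrt n),
        ‖∑ jk ∈ s, a jk • Top jk (bvec n (p, r))‖ ^ 2 :=
      Finset.sum_nonneg fun r _ => Finset.sum_nonneg fun p _ => sq_nonneg _
    have hEub : ∑ r ∈ range K, ∑ p ∈ Icc 1 (Nat.sqrt n),
          ‖∑ jk ∈ s, a jk • Top jk (bvec n (p, r))‖ ^ 2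
        ≤ (K:ℝ) * ((Nat.sqrt n : ℝ) * Bd) := by
      have hin : ∀ r ∈ range K, ∑ p ∈ Icc 1 (Nat.sqrt n),
          ‖∑ jk ∈ s, a jk • Top jk (bvec n (p, r))‖ ^ 2 ≤ (Nat.sqrt n : ℝ) * Bd := by
        intro r _
        calc ∑ p ∈ Icc 1 (Nat.sqrt n), ‖∑ jk ∈ s, a jk • Top jk (bvec n (p, r))‖ ^ 2
            ≤ ∑ p ∈ Icc 1 (Nat.sqrt n), Bd := Finset.sum_le_sum fun p _ => hgBd n (p, r)
          _ = (Nat.sqrt n : ℝ) * Bd := by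
              rw [Finset.sum_const, Nat.card_Icc, nsmul_eq_mul]
              norm_num
      calc ∑ r ∈ range K, ∑ p ∈ Icc 1 (Nat.sqrt n),
            ‖∑ jk ∈ s, a jk • Top jk (bvec n (p, r))‖ ^ 2
          ≤ ∑ _r ∈ range K, (Nat.sqrt n : ℝ) * Bd := Finset.sum_le_sum hin
        _ = (K:ℝ) * ((Nat.sqrt n : ℝ) * Bd) := by
            rw [Finset.sum_const, Finset.card_range, nsmul_eq_mul]
    have hcast : (((n / Nat.sqrt n - K) * Nat.sqrt n : ℕ) : ℝ) / n * A
        = (1/(n:ℝ)) * (((n / Nat.sqrt n - K : ℕ) : ℝ) * ((Nat.sqrt n : ℝ) * A)) := by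
      push_cast
      ring
    constructor
    · rw [hsum_eq, hsplit, hmain, hcast]
      apply mul_le_mul_of_nonneg_left _ (by positivity)
      linarith
    · rw [hsum_eq, hsplit, hmain]
      have hcast2 : (((n / Nat.sqrt n - K) * Nat.sqrt n : ℕ) : ℝ) / n * A
            + (K:ℝ) * Bd * ((Nat.sqrt n : ℝ) / n)
          = (1/(n:ℝ)) * ((K:ℝ) * ((Nat.sqrt n : ℝ) * Bd)
            + ((n / Nat.sqrt n - K : ℕ) : ℝ) * ((Nat.sqrt n : ℝ) * A)) := by
        push_cast
        ring
      rw [hcast2]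
      apply mul_le_mul_of_nonneg_left _ (by positivity)
      linarith
  have hlow : Tendsto (fun n : ℕ => (((n / Nat.sqrt n - K) * Nat.sqrt n : ℕ) : ℝ) / n * A)
      atTop (nhds A) := by
    simpa using (lim4 K).mul_const A
  have hup : Tendsto (fun n : ℕ => (((n / Nat.sqrt n - K) * Nat.sqrt n : ℕ) : ℝ) / n * A
      + (K:ℝ) * Bd * ((Nat.sqrt n : ℝ) / n)) atTop (nhds A) := by
    simpa using hlow.add (lim1.const_mul ((K:ℝ) * Bd))
  exact tendsto_of_tendsto_of_tendsto_of_le_of_le' hlow hup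
    (hsand.mono fun n h => h.1) (hsand.mono fun n h => h.2)
end
end
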